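/- Let T be a linear contraction on a Banach space X commuting with a projection P such that TP is quasi-compact. If there exists n0 ∈ ℕ with δ_P(T^{n0}) < 1, then T is quasi-compact. -/

import Mathlib

open Filter Topology

noncomputable def dobrushin {X : Type*} [NormedAddCommGroup X] [NormedSpace ℝ X]
    (P A : X →L[ℝ] X) : ℝ :=
  sSup {r : ℝ | ∃ x : X, P x = 0 ∧ x ≠ 0 ∧ r = ‖A x‖ / ‖x‖}

def QuasiCompact {X : Type*} [NormedAddCommGroup X] [NormedSpace ℝ X]
    (T : X →L[ℝ] X) : Prop :=
  ∃ n : ℕ, 0 < n ∧ ∃ K : X →L[ℝ] X, IsCompactOperator K ∧ ‖T ^ n - K‖ < 1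

theorem stmt7 {X : Type*} [NormedAddCommGroup X] [NormedSpace ℝ X] [CompleteSpace X]
    (P T : X →L[ℝ] X) (hP : P * P = P) (hT : ‖T‖ ≤ 1) (hcomm : T * P = P * T)
    (hqc : QuasiCompact (T * P))
    (n0 : ℕ) (hdelta : dobrushin P (T ^ n0) < 1) :
    QuasiCompact T := by
  obtain ⟨m, hm, K, hK, hKnorm⟩ := hqc
  set δ : ℝ := max (dobrushin P (T ^ n0)) 0 with hδdef
  have hδ0 : 0 ≤ δ := le_max_right _ _
  have hδ1 : δ < 1 := max_lt hdelta zero_lt_one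
  have hTpow : ∀ k : ℕ, ‖T ^ k‖ ≤ 1 := by
    intro k
    induction k with
    | zero => rw [pow_zero]; exact ContinuousLinearMap.norm_id_le
    | succ i ih =>
      rw [pow_succ]
      calc ‖T ^ i * T‖ ≤ ‖T ^ i‖ * ‖T‖ := norm_mul_le _ _
      _ ≤ 1 * 1 := mul_le_mul ih hT (norm_nonneg _) zero_le_one
      _ = 1 := one_mul 1
  have hbdd : BddAbove {r : ℝ | ∃ x : X, P x = 0 ∧ x ≠ 0 ∧ r = ‖(T ^ n0) x‖ / ‖x‖} := by
    refine ⟨1, ?_⟩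
    rintro r ⟨x, -, hx0, rfl⟩
    rw [div_le_one (norm_pos_iff.mpr hx0)]
    calc ‖(T ^ n0) x‖ ≤ ‖T ^ n0‖ * ‖x‖ := (T ^ n0).le_opNorm x
    _ ≤ 1 * ‖x‖ := mul_le_mul_of_nonneg_right (hTpow n0) (norm_nonneg x)
    _ = ‖x‖ := one_mul _
  have hle : ∀ x : X, P x = 0 → x ≠ 0 → ‖(T ^ n0) x‖ / ‖x‖ ≤ δ := by
    intro x hx hx0
    exact le_trans (le_csSup hbdd ⟨x, hx, hx0, rfl⟩) (le_max_left _ _)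
  set n1 : ℕ := max n0 1 with hn1
  have hn1pos : 0 < n1 := lt_of_lt_of_le Nat.one_pos (le_max_right _ _)
  have hbase : ∀ x : X, P x = 0 → ‖(T ^ n1) x‖ ≤ δ * ‖x‖ := by
    intro x hx
    rcases eq_or_ne x 0 with rfl | hx0
    · simp
    · rcases Nat.eq_zero_or_pos n0 with h0 | hpos
      · exfalso
        have h := hle x hx hx0
        rw [h0] at h
        rw [pow_zero, ContinuousLinearMap.one_apply,
          div_self (norm_ne_zero_iff.mpr hx0)] at h
        linarith
      · have hn1e : n1 = n0 := max_eq_left hpos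
        rw [hn1e]
        have h := hle x hx hx0
        rw [div_le_iff₀ (norm_pos_iff.mpr hx0)] at h
        exact h
  have hker0 : ∀ (k : ℕ) (x : X), P x = 0 → P ((T ^ k) x) = 0 := by
    intro k x hx
    calc P ((T ^ k) x) = (P * T ^ k) x := rfl
    _ = (T ^ k * P) x := by rw [(Commute.pow_left hcomm k).eq]
    _ = (T ^ k) (P x) := rfl
    _ = 0 := by rw [hx, map_zero]
  have hker : ∀ (k : ℕ) (x : X), P x = 0 → ‖(T ^ (n1 * k)) x‖ ≤ δ ^ k * ‖x‖ := by
    intro k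
    induction k with
    | zero => intro x hx; simp
    | succ i ih =>
      intro x hx
      have h1 : n1 * (i + 1) = n1 + n1 * i := by ring
      rw [h1, pow_add, ContinuousLinearMap.mul_apply]
      calc ‖(T ^ n1) ((T ^ (n1 * i)) x)‖ ≤ δ * ‖(T ^ (n1 * i)) x‖ :=
        hbase _ (hker0 _ x hx)
      _ ≤ δ * (δ ^ i * ‖x‖) := mul_le_mul_of_nonneg_left (ih x hx) hδ0
      _ = δ ^ (i + 1) * ‖x‖ := by ring
  set R : X →L[ℝ] X := (T * P) ^ m - K with hR
  have hKR : K + R = (T * P) ^ m := by rw [hR]; abel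
  have hRnorm : ‖R‖ < 1 := hKnorm
  have hbin : ∀ j : ℕ, ∃ C : X →L[ℝ] X,
      IsCompactOperator C ∧ ((T * P) ^ m) ^ j = R ^ j + C := by
    intro j
    induction j with
    | zero => exact ⟨0, isCompactOperator_zero, by simp⟩
    | succ i ih =>
      obtain ⟨C, hC, hCe⟩ := ih
      refine ⟨R ^ i * K + C * (T * P) ^ m, ?_, ?_⟩
      · apply IsCompactOperator.add
        · exact hK.continuous_comp (R ^ i).continuous
        · exact hC.comp_clm ((T * P) ^ m)
      · rw [pow_succ, hCe, ← hKR]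
        noncomm_ring
  -- choose N
  obtain ⟨N1, hN1⟩ := exists_pow_lt_of_lt_one (by norm_num : (0:ℝ) < 1/2) hRnorm
  have hPpos : (0:ℝ) < 1 + ‖P‖ := by positivity
  obtain ⟨N2, hN2⟩ := exists_pow_lt_of_lt_one
    (show (0:ℝ) < (1/2)/(1+‖P‖) from by positivity) hδ1
  set N : ℕ := max (max N1 N2) 1 with hN
  have hNpos : 0 < N := lt_of_lt_of_le Nat.one_pos (le_max_right _ _)
  have hRnn : 0 ≤ ‖R‖ := norm_nonneg R
  have hRN : ‖R‖ ^ N < 1/2 :=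
    lt_of_le_of_lt (pow_le_pow_of_le_one hRnn hRnorm.le
      (le_trans (le_max_left N1 N2) (le_max_left _ _))) hN1
  have hδN : δ ^ N < (1/2)/(1+‖P‖) :=
    lt_of_le_of_lt (pow_le_pow_of_le_one hδ0 hδ1.le
      (le_trans (le_max_right N1 N2) (le_max_left _ _))) hN2
  set j : ℕ := n1 * N with hj
  have hjpos : 0 < j := Nat.mul_pos hn1pos hNpos
  set n : ℕ := m * j with hn
  have hnpos : 0 < n := Nat.mul_pos hm hjpos
  obtain ⟨C, hC, hCe⟩ := hbin j
  have hPpow : ∀ k : ℕ, 0 < k → P ^ k = P := by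
    intro k hk
    induction k with
    | zero => exact absurd hk (lt_irrefl 0)
    | succ i ih =>
      rcases Nat.eq_zero_or_pos i with rfl | hi
      · rw [pow_one]
      · rw [pow_succ, ih hi, hP]
  have key : T ^ n * P = R ^ j + C := by
    have h1 : (T * P) ^ n = T ^ n * P ^ n := Commute.mul_pow hcomm n
    rw [hPpow n hnpos] at h1
    rw [← h1, hn, pow_mul, hCe]
  have hsplit : T ^ n - C = R ^ j + T ^ n * (1 - P) := by
    rw [mul_sub, mul_one, key]
    abel
  have hn_alt : n = n1 * (m * N) := by rw [hn, hj]; ring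
  have hbound1 : ‖R ^ j‖ ≤ ‖R‖ ^ N := by
    calc ‖R ^ j‖ ≤ ‖R‖ ^ j := norm_pow_le' R hjpos
    _ ≤ ‖R‖ ^ N := pow_le_pow_of_le_one hRnn hRnorm.le (Nat.le_mul_of_pos_left N hn1pos)
  have hbound2 : ‖T ^ n * (1 - P)‖ ≤ δ ^ N * (1 + ‖P‖) := by
    apply ContinuousLinearMap.opNorm_le_bound _ (by positivity)
    intro x
    have hone : ((1 : X →L[ℝ] X) - P) x = x - P x := rfl
    have hpx : P (((1 : X →L[ℝ] X) - P) x) = 0 := by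
      rw [hone, map_sub]
      have hPP : P (P x) = P x := by
        have := congrArg (fun f : X →L[ℝ] X => f x) hP
        simpa using this
      rw [hPP, sub_self]
    have h2 : ‖((1 : X →L[ℝ] X) - P) x‖ ≤ (1 + ‖P‖) * ‖x‖ := by
      rw [hone]
      calc ‖x - P x‖ ≤ ‖x‖ + ‖P x‖ := norm_sub_le _ _
      _ ≤ ‖x‖ + ‖P‖ * ‖x‖ := add_le_add le_rfl (P.le_opNorm x)
      _ = (1 + ‖P‖) * ‖x‖ := by ring
    calc ‖(T ^ n * (1 - P)) x‖ = ‖(T ^ (n1 * (m * N))) (((1 : X →L[ℝ] X) - P) x)‖ := by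
          rw [ContinuousLinearMap.mul_apply, ← hn_alt]
    _ ≤ δ ^ (m * N) * ‖((1 : X →L[ℝ] X) - P) x‖ := hker (m * N) _ hpx
    _ ≤ δ ^ N * ((1 + ‖P‖) * ‖x‖) := by
        have h1 : δ ^ (m * N) ≤ δ ^ N :=
          pow_le_pow_of_le_one hδ0 hδ1.le (Nat.le_mul_of_pos_left N hm)
        exact mul_le_mul h1 h2 (norm_nonneg _) (by positivity)
    _ = δ ^ N * (1 + ‖P‖) * ‖x‖ := by ring
  refine ⟨n, hnpos, C, hC, ?_⟩
  calc ‖T ^ n - C‖ = ‖R ^ j + T ^ n * (1 - P)‖ := by rw [hsplit]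
  _ ≤ ‖R ^ j‖ + ‖T ^ n * (1 - P)‖ := norm_add_le _ _
  _ ≤ ‖R‖ ^ N + δ ^ N * (1 + ‖P‖) := add_le_add hbound1 hbound2
  _ < 1/2 + 1/2 := by
      apply add_lt_add hRN
      calc δ ^ N * (1 + ‖P‖) < (1/2)/(1+‖P‖) * (1+‖P‖) :=
            mul_lt_mul_of_pos_right hδN hPpos
      _ = 1/2 := div_mul_cancel₀ _ (ne_of_gt hPpos)
  _ = 1 := by norm_num
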